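/- Let v be a Llull matrix with CLC structure and positive turnouts. Define ρ_x = (1/(N−1)) Σ_{y≠x} v_{xy} and σ_x = (1/(N−1)) Σ_{y≠x} v_{xy}/t_{xy}. Then for all x, y: σ_x > σ_y if and only if ρ_x > ρ_y. -/

import Mathlib

/-- The minimum score along a path `x, z₁, …, zₖ, y` (the list gives the
intermediate points; the empty list is the direct link from `x` to `y`). -/
def chainMin {S : Type*} (v : S → S → ℝ) : S → List S → S → ℝ
  | x, [], y => v x y
  | x, z :: l, y => min (v x z) (chainMin v z l y)

/-- Indirect (max-min) score: supremum over all paths from `x` to `y`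
of the minimum direct score along the path. -/
noncomputable def iScore {S : Type*} (v : S → S → ℝ) (x y : S) : ℝ :=
  sSup {r : ℝ | ∃ l : List S, r = chainMin v x l y}

/-- A Llull matrix: preference scores in `[0,1]` with `v x y + v y x ≤ 1`. -/
def IsLlull {S : Type*} (v : S → S → ℝ) : Prop :=
  ∀ x y : S, x ≠ y → 0 ≤ v x y ∧ v x y ≤ 1 ∧ v x y + v y x ≤ 1


/-- CLC structure with respect to the linear order on `S` (the admissible order ξ):
(1) `v x y ≥ v y x` for `x < y`; (2) `v x z = max (v x y) (v y z)` and
(3) `v z x = min (v z y) (v y x)` for `x < y < z`; (4) `0 ≤ t x z − t x' z ≤ m x x'`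
for `z ∉ {x, x'}` where `x'` is the immediate successor (`x ⋖ x'`),
`t x y = v x y + v y x` and `m x y = v x y − v y x`. -/
def CLC {S : Type*} [LinearOrder S] (v : S → S → ℝ) : Prop :=
  (∀ x y : S, x < y → v y x ≤ v x y) ∧
  (∀ x y z : S, x < y → y < z → v x z = max (v x y) (v y z)) ∧
  (∀ x y z : S, x < y → y < z → v z x = min (v z y) (v y x)) ∧
  (∀ x x' z : S, x ⋖ x' → z ≠ x → z ≠ x' →
    0 ≤ (v x z + v z x) - (v x' z + v z x') ∧
    (v x z + v z x) - (v x' z + v z x') ≤ v x x' - v x' x)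

/-- Mean preference score `ρ x = (1/(N−1)) Σ_{y≠x} v x y`. -/
noncomputable def mps {S : Type*} [Fintype S] [DecidableEq S]
    (v : S → S → ℝ) (x : S) : ℝ :=
  ((Fintype.card S : ℝ) - 1)⁻¹ * ∑ y ∈ Finset.univ.erase x, v x y

/-- Mean relative preference score `σ x = (1/(N−1)) Σ_{y≠x} v x y / t x y`. -/
noncomputable def mrps {S : Type*} [Fintype S] [DecidableEq S]
    (v : S → S → ℝ) (x : S) : ℝ :=
  ((Fintype.card S : ℝ) - 1)⁻¹ * ∑ y ∈ Finset.univ.erase x, v x y / (v x y + v y x)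

/-- With CLC structure and positive turnouts, `σ x > σ y` iff `ρ x > ρ y`. -/
private lemma adj_key {S : Type*} [LinearOrder S] [Fintype S] [DecidableEq S]
    (hS : 2 ≤ Fintype.card S)
    (v : S → S → ℝ) (hv : IsLlull v) (hclc : CLC v)
    (ht : ∀ x y : S, x ≠ y → 0 < v x y + v y x)
    {x x' : S} (hcov : x ⋖ x') :
    mps v x' ≤ mps v x ∧ mrps v x' ≤ mrps v x ∧
      (mps v x' < mps v x ↔ mrps v x' < mrps v x) := by
  obtain ⟨hclc1, hclc2, hclc3, hclc4⟩ := hclc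
  have hlt : x < x' := hcov.1
  have hne : x ≠ x' := ne_of_lt hlt
  have hc : (0:ℝ) < ((Fintype.card S : ℝ) - 1)⁻¹ := by
    have h2 : (2:ℝ) ≤ (Fintype.card S : ℝ) := by exact_mod_cast hS
    have : (0:ℝ) < (Fintype.card S : ℝ) - 1 := by linarith
    exact inv_pos.mpr this
  set T : Finset S := (Finset.univ.erase x').erase x with hT
  have hTmem : ∀ z : S, z ∈ T ↔ z ≠ x ∧ z ≠ x' := by
    intro z; simp [hT, Finset.mem_erase]
  -- per-z basic inequalities
  have keyA : ∀ z ∈ T, v x' z ≤ v x z ∧ v z x ≤ v z x' := by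
    intro z hz
    obtain ⟨hzx, hzx'⟩ := (hTmem z).mp hz
    rcases lt_or_gt_of_ne hzx with h | h
    · constructor
      · rw [hclc3 z x x' h hlt]; exact min_le_right _ _
      · rw [hclc2 z x x' h hlt]; exact le_max_left _ _
    · have hx'z : x' < z := by
        rcases lt_trichotomy x' z with h' | h' | h'
        · exact h'
        · exact absurd h'.symm hzx'
        · exact absurd h' (hcov.2 h)
      constructor
      · rw [hclc2 x x' z hlt hx'z]; exact le_max_right _ _
      · rw [hclc3 x x' z hlt hx'z]; exact min_le_left _ _
  have hd0 : 0 ≤ v x x' - v x' x := sub_nonneg.mpr (hclc1 x x' hlt)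
  -- sums split
  have hx'mem : x' ∈ Finset.univ.erase x := Finset.mem_erase.mpr ⟨hne.symm, Finset.mem_univ _⟩
  have hxmem : x ∈ Finset.univ.erase x' := Finset.mem_erase.mpr ⟨hne, Finset.mem_univ _⟩
  have hTeq : (Finset.univ.erase x).erase x' = T := Finset.erase_right_comm
  have hsum1 : ∀ f : S → ℝ, ∑ y ∈ Finset.univ.erase x, f y = (∑ z ∈ T, f z) + f x' := by
    intro f; rw [← Finset.sum_erase_add _ f hx'mem, hTeq]
  have hsum2 : ∀ f : S → ℝ, ∑ y ∈ Finset.univ.erase x', f y = (∑ z ∈ T, f z) + f x := by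
    intro f; rw [← Finset.sum_erase_add _ f hxmem]
  set D1 : ℝ := ∑ z ∈ T, (v x z - v x' z) with hD1def
  set D2 : ℝ := ∑ z ∈ T, (v x z / (v x z + v z x) - v x' z / (v x' z + v z x')) with hD2def
  have hmps : mps v x - mps v x' =
      ((Fintype.card S : ℝ) - 1)⁻¹ * (D1 + (v x x' - v x' x)) := by
    unfold mps
    rw [hsum1 (fun y => v x y), hsum2 (fun y => v x' y), hD1def, Finset.sum_sub_distrib]
    ring
  have hmrps : mrps v x - mrps v x' =
      ((Fintype.card S : ℝ) - 1)⁻¹ *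
        (D2 + (v x x' - v x' x) / (v x x' + v x' x)) := by
    unfold mrps
    rw [hsum1 (fun y => v x y / (v x y + v y x)), hsum2 (fun y => v x' y / (v x' y + v y x')),
      hD2def, Finset.sum_sub_distrib]
    have h1 : v x' x / (v x' x + v x x') = v x' x / (v x x' + v x' x) := by rw [add_comm]
    rw [h1, sub_div]
    ring
  have htpos : 0 < v x x' + v x' x := ht x x' hne
  -- termwise nonneg
  have hf_nonneg : ∀ z ∈ T, 0 ≤ v x z - v x' z := fun z hz =>
    sub_nonneg.mpr (keyA z hz).1
  have hg_nonneg : ∀ z ∈ T,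
      0 ≤ v x z / (v x z + v z x) - v x' z / (v x' z + v z x') := by
    intro z hz
    obtain ⟨hzx, hzx'⟩ := (hTmem z).mp hz
    obtain ⟨haa', hbb'⟩ := keyA z hz
    have ha'0 : 0 ≤ v x' z := (hv x' z hzx'.symm).1
    have hb0 : 0 ≤ v z x := (hv z x hzx).1
    have hb'0 : 0 ≤ v z x' := le_trans hb0 hbb'
    have htp : 0 < v x z + v z x := ht x z hzx.symm
    have htp' : 0 < v x' z + v z x' := ht x' z hzx'.symm
    rw [sub_nonneg, div_le_div_iff₀ htp' htp]
    nlinarith [mul_nonneg (sub_nonneg.mpr haa') hb'0, mul_nonneg ha'0 (sub_nonneg.mpr hbb')]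
  have hD1nonneg : 0 ≤ D1 := Finset.sum_nonneg hf_nonneg
  have hD2nonneg : 0 ≤ D2 := Finset.sum_nonneg hg_nonneg
  -- termwise strictness transfer
  have hfg : ∀ z ∈ T, v x' z < v x z →
      (v x' z / (v x' z + v z x') < v x z / (v x z + v z x) ∨ 0 < v x x' - v x' x) := by
    intro z hz hlt'
    obtain ⟨hzx, hzx'⟩ := (hTmem z).mp hz
    obtain ⟨haa', hbb'⟩ := keyA z hz
    have ha'0 : 0 ≤ v x' z := (hv x' z hzx'.symm).1
    have hb0 : 0 ≤ v z x := (hv z x hzx).1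
    have hb'0 : 0 ≤ v z x' := le_trans hb0 hbb'
    have htp : 0 < v x z + v z x := ht x z hzx.symm
    have htp' : 0 < v x' z + v z x' := ht x' z hzx'.symm
    rcases eq_or_lt_of_le hb'0 with hb'eq | hb'pos
    · right
      have hb_eq : v z x = 0 := le_antisymm (hb'eq ▸ hbb') hb0
      have h4 := (hclc4 x x' z hcov hzx hzx').2
      rw [hb_eq, ← hb'eq] at h4
      linarith
    · left
      rw [div_lt_div_iff₀ htp' htp]
      nlinarith [mul_pos (sub_pos.mpr hlt') hb'pos, mul_nonneg ha'0 (sub_nonneg.mpr hbb')]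
  have hgf : ∀ z ∈ T, v x' z / (v x' z + v z x') < v x z / (v x z + v z x) →
      v x' z < v x z := by
    intro z hz hglt
    obtain ⟨hzx, hzx'⟩ := (hTmem z).mp hz
    obtain ⟨haa', hbb'⟩ := keyA z hz
    by_contra hle
    push_neg at hle
    have haeq : v x z = v x' z := le_antisymm hle haa'
    have h4 := (hclc4 x x' z hcov hzx hzx').1
    have hbeq : v z x = v z x' := by linarith
    rw [haeq, hbeq] at hglt
    exact lt_irrefl _ hglt
  -- equivalence at sum level
  have hsum_iff : (0 < D1 + (v x x' - v x' x)) ↔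
      (0 < D2 + (v x x' - v x' x) / (v x x' + v x' x)) := by
    constructor
    · intro h
      rcases eq_or_lt_of_le hd0 with hdeq | hdpos
      · have hD1pos : 0 < D1 := by linarith
        have : ∃ z ∈ T, 0 < v x z - v x' z := by
          by_contra hcon
          push_neg at hcon
          have : D1 ≤ 0 := Finset.sum_nonpos hcon
          linarith
        obtain ⟨z, hzT, hzpos⟩ := this
        rcases hfg z hzT (by linarith [sub_pos.mp hzpos]) with hg | hd'
        · have hD2pos : 0 < D2 :=
            Finset.sum_pos' hg_nonneg ⟨z, hzT, sub_pos.mpr hg⟩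
          have : 0 ≤ (v x x' - v x' x) / (v x x' + v x' x) := div_nonneg hd0 htpos.le
          linarith
        · have : 0 < (v x x' - v x' x) / (v x x' + v x' x) := div_pos hd' htpos
          linarith
      · have : 0 < (v x x' - v x' x) / (v x x' + v x' x) := div_pos hdpos htpos
        linarith
    · intro h
      rcases eq_or_lt_of_le hd0 with hdeq | hdpos
      · have : (v x x' - v x' x) / (v x x' + v x' x) = 0 := by rw [← hdeq]; simp
        rw [this, add_zero] at h
        have : ∃ z ∈ T, 0 < v x z / (v x z + v z x) - v x' z / (v x' z + v z x') := by
          by_contra hcon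
          push_neg at hcon
          have : D2 ≤ 0 := Finset.sum_nonpos hcon
          linarith
        obtain ⟨z, hzT, hzpos⟩ := this
        have hfpos : v x' z < v x z := hgf z hzT (sub_pos.mp hzpos)
        have hD1pos : 0 < D1 :=
          Finset.sum_pos' hf_nonneg ⟨z, hzT, sub_pos.mpr hfpos⟩
        linarith
      · linarith
  refine ⟨?_, ?_, ?_⟩
  · rw [← sub_nonneg, hmps]
    exact mul_nonneg hc.le (by linarith)
  · rw [← sub_nonneg, hmrps]
    have : 0 ≤ (v x x' - v x' x) / (v x x' + v x' x) := div_nonneg hd0 htpos.le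
    exact mul_nonneg hc.le (by linarith)
  · rw [← sub_pos, ← sub_pos (b := mrps v x'), hmps, hmrps,
      mul_pos_iff_of_pos_left hc, mul_pos_iff_of_pos_left hc]
    exact hsum_iff

private lemma chain_key {S : Type*} [LinearOrder S] [Fintype S] [DecidableEq S]
    (hS : 2 ≤ Fintype.card S)
    (v : S → S → ℝ) (hv : IsLlull v) (hclc : CLC v)
    (ht : ∀ x y : S, x ≠ y → 0 < v x y + v y x) :
    ∀ (n : ℕ) (x y : S),
      (Finset.univ.filter fun c => x < c ∧ c < y).card ≤ n → x < y →
      mps v y ≤ mps v x ∧ mrps v y ≤ mrps v x ∧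
        (mps v y < mps v x ↔ mrps v y < mrps v x) := by
  intro n
  induction n with
  | zero =>
    intro x y hcard hxy
    have hcov : x ⋖ y := by
      refine ⟨hxy, fun c hxc hcy => ?_⟩
      have hmem : c ∈ Finset.univ.filter fun c => x < c ∧ c < y := by
        simp [hxc, hcy]
      have := Finset.card_pos.mpr ⟨c, hmem⟩
      omega
    exact adj_key hS v hv hclc ht hcov
  | succ n ih =>
    intro x y hcard hxy
    by_cases hcov : x ⋖ y
    · exact adj_key hS v hv hclc ht hcov
    · obtain ⟨z, hxz, hzy⟩ := (not_covBy_iff hxy).mp hcov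
      have hzmem : z ∈ Finset.univ.filter fun c => x < c ∧ c < y := by
        simp [hxz, hzy]
      have hsub1 : (Finset.univ.filter fun c => x < c ∧ c < z) ⊆
          Finset.univ.filter fun c => x < c ∧ c < y := by
        intro c hc; simp only [Finset.mem_filter, Finset.mem_univ, true_and] at *
        exact ⟨hc.1, hc.2.trans hzy⟩
      have hsub2 : (Finset.univ.filter fun c => z < c ∧ c < y) ⊆
          Finset.univ.filter fun c => x < c ∧ c < y := by
        intro c hc; simp only [Finset.mem_filter, Finset.mem_univ, true_and] at *
        exact ⟨hxz.trans hc.1, hc.2⟩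
      have hc1 : (Finset.univ.filter fun c => x < c ∧ c < z).card ≤ n := by
        have hlt : (Finset.univ.filter fun c => x < c ∧ c < z).card <
            (Finset.univ.filter fun c => x < c ∧ c < y).card := by
          refine Finset.card_lt_card ⟨hsub1, fun hsub => ?_⟩
          have := hsub hzmem
          simp at this
        omega
      have hc2 : (Finset.univ.filter fun c => z < c ∧ c < y).card ≤ n := by
        have hlt : (Finset.univ.filter fun c => z < c ∧ c < y).card <
            (Finset.univ.filter fun c => x < c ∧ c < y).card := by
          refine Finset.card_lt_card ⟨hsub2, fun hsub => ?_⟩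
          have := hsub hzmem
          simp at this
        omega
      obtain ⟨h1a, h1b, h1c⟩ := ih x z hc1 hxz
      obtain ⟨h2a, h2b, h2c⟩ := ih z y hc2 hzy
      refine ⟨le_trans h2a h1a, le_trans h2b h1b, ?_⟩
      constructor
      · intro h
        by_cases h' : mps v y < mps v z
        · exact lt_of_lt_of_le (h2c.mp h') h1b
        · push_neg at h'
          have hzx : mps v z < mps v x := by
            have : mps v y = mps v z := le_antisymm h2a h'
            linarith
          exact lt_of_le_of_lt h2b (h1c.mp hzx)
      · intro h
        by_cases h' : mrps v y < mrps v z
        · exact lt_of_lt_of_le (h2c.mpr h') h1a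
        · push_neg at h'
          have hzx : mrps v z < mrps v x := by
            have : mrps v y = mrps v z := le_antisymm h2b h'
            linarith
          exact lt_of_le_of_lt h2a (h1c.mpr hzx)

theorem stmt17 {S : Type*} [LinearOrder S] [Fintype S] [DecidableEq S]
    (hS : 2 ≤ Fintype.card S)
    (v : S → S → ℝ) (hv : IsLlull v) (hclc : CLC v)
    (ht : ∀ x y : S, x ≠ y → 0 < v x y + v y x) :
    ∀ x y : S, mrps v y < mrps v x ↔ mps v y < mps v x := by
  intro x y
  rcases lt_trichotomy x y with h | h | h
  · obtain ⟨h1, h2, h3⟩ := chain_key hS v hv hclc ht _ x y le_rfl h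
    exact h3.symm
  · subst h; simp
  · obtain ⟨h1, h2, _⟩ := chain_key hS v hv hclc ht _ y x le_rfl h
    constructor
    · intro h'; exact absurd h' (not_lt.mpr h2)
    · intro h'; exact absurd h' (not_lt.mpr h1)
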